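/- Let 0 ≤ λ < α ≤ d, let 0 < θ ≤ φ ≤ 1, and let h(θ) ∈ (λ, α). Define g: (0,1] → ℝ by g(φ) = (A·φ·α + λ)/(A·φ + 1) where A = (h(θ) − λ)/(θ·(α − h(θ))). Then g solves the differential equation g'(φ') = (g(φ') − λ)(α − g(φ'))/((α − λ)·φ') on (0,1) with g(θ) = h(θ), and g(φ) = h(θ) + (h(θ) − λ)(α − h(θ))·(φ − θ)/(φ·(h(θ) − λ) + θ·(α − h(θ))). -/

import Mathlib

/-- The Möbius function `g(φ) = (Aφα + λ)/(Aφ + 1)` with `A = (h−λ)/(θ(α−h))` solves the ODE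
`g' = (g−λ)(α−g)/((α−λ)φ')` on `(0,1)`, satisfies `g(θ) = h`, and
`g(φ) = h + (h−λ)(α−h)(φ−θ)/(φ(h−λ)+θ(α−h))`. -/
theorem stmt6 (lam alp d θ φ h : ℝ)
    (h0 : 0 ≤ lam) (hla : lam < alp) (had : alp ≤ d)
    (hθ : 0 < θ) (hθφ : θ ≤ φ) (hφ1 : φ ≤ 1)
    (hh : h ∈ Set.Ioo lam alp) :
    let A : ℝ := (h - lam) / (θ * (alp - h))
    let G : ℝ → ℝ := fun x => (A * x * alp + lam) / (A * x + 1)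
    (∀ x ∈ Set.Ioo (0 : ℝ) 1,
      HasDerivAt G ((G x - lam) * (alp - G x) / ((alp - lam) * x)) x) ∧
    G θ = h ∧
    G φ = h + (h - lam) * (alp - h) * (φ - θ) / (φ * (h - lam) + θ * (alp - h)) := by
  intro A G
  obtain ⟨hl, hr⟩ := hh
  have hlh : 0 < h - lam := by linarith
  have hha : 0 < alp - h := by linarith
  have hal : 0 < alp - lam := by linarith
  have hA : 0 < A := div_pos hlh (mul_pos hθ hha)
  have hden : ∀ x : ℝ, 0 < x → A * x + 1 ≠ 0 := by
    intro x hx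
    have : 0 < A * x + 1 := by positivity
    exact ne_of_gt this
  refine ⟨?_, ?_, ?_⟩
  · intro x hx
    obtain ⟨hx0, hx1⟩ := hx
    have hd := hden x hx0
    have h1 : HasDerivAt (fun x : ℝ => A * x * alp + lam) (A * alp) x := by
      simpa using (((hasDerivAt_id x).const_mul A).mul_const alp).add_const lam
    have h2 : HasDerivAt (fun x : ℝ => A * x + 1) A x := by
      simpa using ((hasDerivAt_id x).const_mul A).add_const 1
    have h3 := h1.div h2 hd
    refine h3.congr_deriv (Eq.symm ?_)
    show (G x - lam) * (alp - G x) / ((alp - lam) * x)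
        = (A * alp * (A * x + 1) - (A * x * alp + lam) * A) / (A * x + 1) ^ 2
    show ((A * x * alp + lam) / (A * x + 1) - lam) * (alp - (A * x * alp + lam) / (A * x + 1))
        / ((alp - lam) * x)
        = (A * alp * (A * x + 1) - (A * x * alp + lam) * A) / (A * x + 1) ^ 2
    have hGl : (A * x * alp + lam) / (A * x + 1) - lam = A * x * (alp - lam) / (A * x + 1) := by
      field_simp; ring
    have hGa : alp - (A * x * alp + lam) / (A * x + 1) = (alp - lam) / (A * x + 1) := by
      field_simp; ring
    rw [hGl, hGa]
    field_simp
    ring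
  · show (A * θ * alp + lam) / (A * θ + 1) = h
    have hd : θ * (alp - h) ≠ 0 := ne_of_gt (mul_pos hθ hha)
    have hAθ : A * θ = (h - lam) / (alp - h) := by
      show (h - lam) / (θ * (alp - h)) * θ = (h - lam) / (alp - h)
      rw [div_mul_eq_mul_div, div_eq_div_iff hd hha.ne']; ring
    rw [hAθ]
    have hne1 : alp - h ≠ 0 := ne_of_gt hha
    have hne2 : h - lam + (alp - h) ≠ 0 := by positivity
    field_simp
    ring
  · show (A * φ * alp + lam) / (A * φ + 1) =
      h + (h - lam) * (alp - h) * (φ - θ) / (φ * (h - lam) + θ * (alp - h))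
    have hφ0 : 0 < φ := lt_of_lt_of_le hθ hθφ
    have hd1 := hden φ hφ0
    have hd2 : φ * (h - lam) + θ * (alp - h) ≠ 0 := by positivity
    have hAφ : A * φ = (h - lam) * φ / (θ * (alp - h)) := by
      show (h - lam) / (θ * (alp - h)) * φ = _
      rw [div_mul_eq_mul_div]
    rw [hAφ]
    have hθa : θ * (alp - h) ≠ 0 := ne_of_gt (mul_pos hθ hha)
    field_simp
    ring
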